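/- arXiv:2412.17798 — 4 statements merged into one kernel-verified Lean document; each statement's English description precedes it below -/
import Mathlib

section
/- The map φ(w,h) = (w ∘ h^M, L h^{-1}, h^{-1}) is a bijection from ker(C) × (ℂ*)^n onto the incidence variety {(κ,b,x) ∈ ℂ^m × ℂ^d × (ℂ*)^n : C(κ ∘ x^M) = 0 and Lx - b = 0}, where ∘ denotes componentwise multiplication, h^M denotes the vector of Laurent monomials with exponent vectors the columns of M, and h^{-1} is taken componentwise. -/
open Matrix

/-- The vector of Laurent monomials with exponent vectors the columns of `M`. -/
noncomputable def monC {n m : ℕ} (M : Matrix (Fin n) (Fin m) ℤ) (h : Fin n → ℂ) :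
    Fin m → ℂ :=
  fun j => ∏ i, h i ^ (M i j)

lemma monC_mul_inv {n m : ℕ} (M : Matrix (Fin n) (Fin m) ℤ) (h : Fin n → ℂ)
    (hh : ∀ i, h i ≠ 0) :
    monC M h * monC M (fun i => (h i)⁻¹) = 1 := by
  funext j
  simp only [monC, Pi.mul_apply, Pi.one_apply, ← Finset.prod_mul_distrib]
  rw [Finset.prod_eq_one]
  intro i _
  rw [_root_.inv_zpow, mul_inv_cancel₀ (zpow_ne_zero _ (hh i))]

/-- φ(w,h) = (w ∘ h^M, L h⁻¹, h⁻¹) is a bijection from ker(C) × (ℂ*)^n onto the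
incidence variety. -/
theorem phi_bijOn_incidence_variety {s m n d : ℕ}
    (C : Matrix (Fin s) (Fin m) ℝ) (M : Matrix (Fin n) (Fin m) ℤ)
    (L : Matrix (Fin d) (Fin n) ℝ) :
    Set.BijOn
      (fun p : (Fin m → ℂ) × (Fin n → ℂ) =>
        ((p.1 * monC M p.2 : Fin m → ℂ),
          (L.map (Complex.ofReal)) *ᵥ (fun i => (p.2 i)⁻¹),
          fun i => (p.2 i)⁻¹))
      {p : (Fin m → ℂ) × (Fin n → ℂ) |
        (C.map (Complex.ofReal)) *ᵥ p.1 = 0 ∧ ∀ i, p.2 i ≠ 0}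
      {q : (Fin m → ℂ) × (Fin d → ℂ) × (Fin n → ℂ) |
        (∀ i, q.2.2 i ≠ 0) ∧
        (C.map (Complex.ofReal)) *ᵥ (q.1 * monC M q.2.2) = 0 ∧
        (L.map (Complex.ofReal)) *ᵥ q.2.2 - q.2.1 = 0} := by
  refine ⟨?_, ?_, ?_⟩
  · rintro ⟨w, h⟩ ⟨hC, hh⟩
    refine ⟨fun i => inv_ne_zero (hh i), ?_, sub_self _⟩
    have : (w * monC M h) * monC M (fun i => (h i)⁻¹) = w := by
      rw [mul_assoc, monC_mul_inv M h hh, mul_one]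
    rw [this, hC]
  · rintro ⟨w, h⟩ ⟨hC, hh⟩ ⟨w', h'⟩ ⟨hC', hh'⟩ heq
    simp only [Prod.mk.injEq] at heq
    have hhe : h = h' := by
      funext i
      have := congrFun heq.2.2 i
      simpa using congrArg (·⁻¹) this
    subst hhe
    have hw : w = w' := by
      have h1 := heq.1
      have := congrArg (· * monC M (fun i => (h i)⁻¹)) h1
      simpa [mul_assoc, monC_mul_inv M h hh] using this
    rw [hw]
  · rintro ⟨κ, b, x⟩ ⟨hx, hC, hL⟩
    refine ⟨(κ * monC M x, fun i => (x i)⁻¹), ⟨hC, fun i => inv_ne_zero (hx i)⟩, ?_⟩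
    have hxx : (fun i => ((x i)⁻¹)⁻¹) = x := by funext i; exact inv_inv _
    have hb : (L.map (Complex.ofReal)) *ᵥ x = b := by
      have := sub_eq_zero.mp hL; exact this
    simp only [Prod.mk.injEq, hxx]
    exact ⟨by rw [mul_assoc, monC_mul_inv M x hx, mul_one], hb, trivial⟩
end

section
/- The map φ(w,h) = (w ∘ h^M, L h^{-1}, h^{-1}) restricts to a bijection from (ker(C) ∩ ℝ^m_{>0}) × ℝ^n_{>0} onto the positive incidence variety {(κ,b,x) ∈ ℝ^m_{>0} × ℝ^d × ℝ^n_{>0} : C(κ ∘ x^M) = 0 and Lx - b = 0}. -/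
open Matrix

/-- The vector of Laurent monomials with exponent vectors the columns of `M`. -/
noncomputable def monR {n m : ℕ} (M : Matrix (Fin n) (Fin m) ℤ) (h : Fin n → ℝ) :
    Fin m → ℝ :=
  fun j => ∏ i, h i ^ (M i j)

lemma monR_inv {n m : ℕ} (M : Matrix (Fin n) (Fin m) ℤ) (h : Fin n → ℝ) :
    monR M (fun i => (h i)⁻¹) = fun j => (monR M h j)⁻¹ := by
  funext j
  simp [monR, _root_.inv_zpow, Finset.prod_inv_distrib]

lemma monR_pos {n m : ℕ} (M : Matrix (Fin n) (Fin m) ℤ) (h : Fin n → ℝ)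
    (hh : ∀ i, 0 < h i) (j : Fin m) : 0 < monR M h j :=
  Finset.prod_pos fun i _ => zpow_pos (hh i) _

/-- φ(w,h) = (w ∘ h^M, L h⁻¹, h⁻¹) restricts to a bijection from
(ker(C) ∩ ℝ^m_{>0}) × ℝ^n_{>0} onto the positive incidence variety. -/
theorem phi_bijOn_positive_incidence_variety {s m n d : ℕ}
    (C : Matrix (Fin s) (Fin m) ℝ) (M : Matrix (Fin n) (Fin m) ℤ)
    (L : Matrix (Fin d) (Fin n) ℝ) :
    Set.BijOn
      (fun p : (Fin m → ℝ) × (Fin n → ℝ) =>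
        ((p.1 * monR M p.2 : Fin m → ℝ),
          L *ᵥ (fun i => (p.2 i)⁻¹),
          fun i => (p.2 i)⁻¹))
      {p : (Fin m → ℝ) × (Fin n → ℝ) |
        C *ᵥ p.1 = 0 ∧ (∀ j, 0 < p.1 j) ∧ ∀ i, 0 < p.2 i}
      {q : (Fin m → ℝ) × (Fin d → ℝ) × (Fin n → ℝ) |
        (∀ j, 0 < q.1 j) ∧ (∀ i, 0 < q.2.2 i) ∧
        C *ᵥ (q.1 * monR M q.2.2) = 0 ∧
        L *ᵥ q.2.2 - q.2.1 = 0} := by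
  constructor
  · -- MapsTo
    rintro ⟨w, h⟩ ⟨hC, hw, hh⟩
    refine ⟨fun j => mul_pos (hw j) (monR_pos M h hh j),
      fun i => inv_pos.mpr (hh i), ?_, sub_self _⟩
    have key : (w * monR M h) * monR M (fun i => (h i)⁻¹) = w := by
      rw [monR_inv]
      funext j
      simp only [Pi.mul_apply]
      rw [mul_assoc, mul_inv_cancel₀ (monR_pos M h hh j).ne', mul_one]
    rw [key, hC]
  constructor
  · -- InjOn
    rintro ⟨w, h⟩ ⟨_, hw, hh⟩ ⟨w', h'⟩ ⟨_, hw', hh'⟩ heq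
    have h3 : (fun i => (h i)⁻¹) = fun i => (h' i)⁻¹ := congrArg (·.2.2) heq
    have hhe : h = h' := by
      funext i
      have := congrFun h3 i
      exact inv_injective this
    have h1 : w * monR M h = w' * monR M h' := congrArg (·.1) heq
    rw [← hhe] at h1
    have hwe : w = w' := by
      funext j
      have := congrFun h1 j
      simp only [Pi.mul_apply] at this
      exact mul_right_cancel₀ (monR_pos M h hh j).ne' this
    simp [hwe, hhe]
  · -- SurjOn
    rintro ⟨κ, b, x⟩ ⟨hκ, hx, hC, hL⟩
    refine ⟨(κ * monR M x, fun i => (x i)⁻¹),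
      ⟨hC, fun j => mul_pos (hκ j) (monR_pos M x hx j),
        fun i => inv_pos.mpr (hx i)⟩, ?_⟩
    have hxx : (fun i => ((x i)⁻¹)⁻¹) = x := by
      funext i; exact inv_inv _
    have hb : L *ᵥ x = b := sub_eq_zero.mp hL
    have hfirst : (κ * monR M x) * monR M (fun i => (x i)⁻¹) = κ := by
      rw [monR_inv]
      funext j
      simp only [Pi.mul_apply]
      rw [mul_assoc, mul_inv_cancel₀ (monR_pos M x hx j).ne', mul_one]
    simp only [hfirst, hxx, hb]
end

section
/- Let N ∈ ℝ^{n×m}, M ∈ ℝ^{n×m}, L ∈ ℝ^{d×n} with d = n - rank(N), and suppose the rows of L span the left kernel of N. If there exist w ∈ ker(N) and h ∈ (ℝ*)^n such that the block matrix [N diag(w) M^T diag(h); L] has rank n, then there exists w' ∈ ker(N) such that N diag(w') M^T has rank equal to rank(N). -/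
open Matrix

lemma rank_fromColumns_le {k a b : ℕ} (A : Matrix (Fin k) (Fin a) ℝ)
    (B : Matrix (Fin k) (Fin b) ℝ) :
    (Matrix.fromCols A B).rank ≤ A.rank + B.rank := by
  have hsub : LinearMap.range (Matrix.fromCols A B).mulVecLin ≤
      LinearMap.range A.mulVecLin ⊔ LinearMap.range B.mulVecLin := by
    rintro x ⟨v, rfl⟩
    have hv : v = Sum.elim (v ∘ Sum.inl) (v ∘ Sum.inr) := by
      funext i; cases i <;> rfl
    rw [Matrix.mulVecLin_apply, hv, Matrix.fromCols_mulVec_sumElim]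
    exact Submodule.add_mem_sup ⟨_, rfl⟩ ⟨_, rfl⟩
  calc (Matrix.fromCols A B).rank
      ≤ Module.finrank ℝ (LinearMap.range A.mulVecLin ⊔ LinearMap.range B.mulVecLin : Submodule ℝ _) :=
        Submodule.finrank_mono hsub
    _ ≤ A.rank + B.rank := by
        have := Submodule.finrank_sup_add_finrank_inf_eq
          (LinearMap.range A.mulVecLin) (LinearMap.range B.mulVecLin)
        unfold Matrix.rank
        omega

lemma rank_fromRows_le {k a b : ℕ} (A : Matrix (Fin a) (Fin k) ℝ)
    (B : Matrix (Fin b) (Fin k) ℝ) :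
    (Matrix.fromRows A B).rank ≤ A.rank + B.rank := by
  rw [← Matrix.rank_transpose, Matrix.transpose_fromRows, ← Matrix.rank_transpose A,
    ← Matrix.rank_transpose B]
  exact rank_fromColumns_le _ _

/-- Nondegeneracy of the augmented steady state system implies nondegeneracy of the
steady state system. -/
theorem nondeg_augmented_implies_nondeg {n m d : ℕ}
    (N M : Matrix (Fin n) (Fin m) ℝ) (L : Matrix (Fin d) (Fin n) ℝ)
    (hd : d = n - N.rank)
    (hL : ∀ v : Fin n → ℝ, v ᵥ* N = 0 ↔ ∃ u : Fin d → ℝ, u ᵥ* L = v)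
    (hyp : ∃ (w : Fin m → ℝ) (h : Fin n → ℝ), N *ᵥ w = 0 ∧ (∀ i, h i ≠ 0) ∧
      (Matrix.fromRows (N * Matrix.diagonal w * Mᵀ * Matrix.diagonal h) L).rank = n) :
    ∃ w' : Fin m → ℝ, N *ᵥ w' = 0 ∧ (N * Matrix.diagonal w' * Mᵀ).rank = N.rank := by
  obtain ⟨w, h, hw, hh, hrank⟩ := hyp
  refine ⟨w, hw, ?_⟩
  set A := N * Matrix.diagonal w * Mᵀ with hA
  -- diag h is invertible, so multiplying by it preserves rank
  have hdet : IsUnit (Matrix.diagonal h).det := by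
    rw [Matrix.det_diagonal]
    exact (Finset.prod_ne_zero_iff.mpr fun i _ => hh i).isUnit
  have hAh : (A * Matrix.diagonal h).rank = A.rank :=
    Matrix.rank_mul_eq_left_of_isUnit_det _ _ hdet
  -- upper bound: rank A ≤ rank N
  have hub : A.rank ≤ N.rank := by
    have : A = N * (Matrix.diagonal w * Mᵀ) := by rw [hA, Matrix.mul_assoc]
    rw [this]
    exact Matrix.rank_mul_le_left _ _
  -- lower bound
  have hLd : L.rank ≤ d := Matrix.rank_le_height L
  have hNn : N.rank ≤ n := Matrix.rank_le_height N
  have hsplit := rank_fromRows_le (A * Matrix.diagonal h) L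
  omega
end

section
/- Consider f_κ(x₁,x₂) = (-κ₁x₁x₂ + κ₂x₂² + κ₃x₂, κ₁x₁x₂ - κ₄x₂² - κ₅x₂) with all κᵢ > 0. If κ₂ ≠ κ₄, κ₂κ₅ - κ₃κ₄ and κ₅ - κ₃ have the same sign as κ₂ - κ₄, then the positive zero set is the single point ((κ₂κ₅ - κ₃κ₄)/(κ₁(κ₂ - κ₄)), (κ₅ - κ₃)/(κ₂ - κ₄)). If κ₂ = κ₄ and κ₃ = κ₅, then the positive zero set equals {((κ₂x₂ + κ₃)/κ₁, x₂) : x₂ > 0}, which is infinite. -/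
/-- Generic ACR does not imply ACR: for the system
f_κ = (-κ₁x₁x₂ + κ₂x₂² + κ₃x₂, κ₁x₁x₂ - κ₄x₂² - κ₅x₂), the positive zero set is a
single point under the generic sign conditions, but is infinite when κ₂ = κ₄, κ₃ = κ₅. -/
theorem generic_ACR_not_ACR (κ₁ κ₂ κ₃ κ₄ κ₅ : ℝ)
    (h1 : 0 < κ₁) (h2 : 0 < κ₂) (h3 : 0 < κ₃) (h4 : 0 < κ₄) (h5 : 0 < κ₅) :
    ((κ₂ ≠ κ₄ → 0 < (κ₂ - κ₄) * (κ₂ * κ₅ - κ₃ * κ₄) → 0 < (κ₂ - κ₄) * (κ₅ - κ₃) →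
      {p : ℝ × ℝ | 0 < p.1 ∧ 0 < p.2 ∧
          -κ₁ * p.1 * p.2 + κ₂ * p.2 ^ 2 + κ₃ * p.2 = 0 ∧
          κ₁ * p.1 * p.2 - κ₄ * p.2 ^ 2 - κ₅ * p.2 = 0}
        = {((κ₂ * κ₅ - κ₃ * κ₄) / (κ₁ * (κ₂ - κ₄)), (κ₅ - κ₃) / (κ₂ - κ₄))}) ∧
    (κ₂ = κ₄ → κ₃ = κ₅ →
      {p : ℝ × ℝ | 0 < p.1 ∧ 0 < p.2 ∧
          -κ₁ * p.1 * p.2 + κ₂ * p.2 ^ 2 + κ₃ * p.2 = 0 ∧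
          κ₁ * p.1 * p.2 - κ₄ * p.2 ^ 2 - κ₅ * p.2 = 0}
        = {p : ℝ × ℝ | p.1 = (κ₂ * p.2 + κ₃) / κ₁ ∧ 0 < p.2} ∧
      {p : ℝ × ℝ | 0 < p.1 ∧ 0 < p.2 ∧
          -κ₁ * p.1 * p.2 + κ₂ * p.2 ^ 2 + κ₃ * p.2 = 0 ∧
          κ₁ * p.1 * p.2 - κ₄ * p.2 ^ 2 - κ₅ * p.2 = 0}.Infinite)) := by
  constructor
  · intro hne hA hB
    have hd : κ₂ - κ₄ ≠ 0 := sub_ne_zero.mpr hne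
    ext p
    simp only [Set.mem_setOf_eq, Set.mem_singleton_iff, Prod.ext_iff]
    constructor
    · rintro ⟨hp1, hp2, e1, e2⟩
      have hsum : (κ₂ - κ₄) * p.2 + (κ₃ - κ₅) = 0 := by
        have h : p.2 * ((κ₂ - κ₄) * p.2 + (κ₃ - κ₅)) = 0 := by nlinarith [e1, e2]
        rcases mul_eq_zero.mp h with h' | h'
        · exact absurd h' (ne_of_gt hp2)
        · exact h'
      have hy : p.2 = (κ₅ - κ₃) / (κ₂ - κ₄) := by
        field_simp
        linarith
      have hx : p.1 = (κ₂ * κ₅ - κ₃ * κ₄) / (κ₁ * (κ₂ - κ₄)) := by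
        have hk : κ₁ * p.1 = κ₂ * p.2 + κ₃ := by
          have h : p.2 * (κ₁ * p.1 - κ₂ * p.2 - κ₃) = 0 := by nlinarith [e1]
          rcases mul_eq_zero.mp h with h' | h'
          · exact absurd h' (ne_of_gt hp2)
          · linarith
        rw [hy] at hk
        field_simp at hk ⊢
        nlinarith [hk]
      exact ⟨hx, hy⟩
    · rintro ⟨hx, hy⟩
      have hy2 : 0 < p.2 := by
        rw [hy]
        rcases lt_or_gt_of_ne hne with h | h
        · have : κ₂ - κ₄ < 0 := by linarith
          have : κ₅ - κ₃ < 0 := by nlinarith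
          exact div_pos_of_neg_of_neg (by linarith) (by linarith)
        · have : 0 < κ₂ - κ₄ := by linarith
          have : 0 < κ₅ - κ₃ := by nlinarith
          positivity
      have hx2 : 0 < p.1 := by
        rw [hx]
        rcases lt_or_gt_of_ne hne with h | h
        · have hd' : κ₂ - κ₄ < 0 := by linarith
          have : κ₂ * κ₅ - κ₃ * κ₄ < 0 := by nlinarith
          exact div_pos_of_neg_of_neg (by linarith) (by nlinarith)
        · have hd' : 0 < κ₂ - κ₄ := by linarith
          have : 0 < κ₂ * κ₅ - κ₃ * κ₄ := by nlinarith
          positivity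
      refine ⟨hx2, hy2, ?_, ?_⟩
      · rw [hx, hy]
        field_simp
        ring
      · rw [hx, hy]
        field_simp
        ring
  · intro he24 he35
    subst he24 he35
    have hset : {p : ℝ × ℝ | 0 < p.1 ∧ 0 < p.2 ∧
          -κ₁ * p.1 * p.2 + κ₂ * p.2 ^ 2 + κ₃ * p.2 = 0 ∧
          κ₁ * p.1 * p.2 - κ₂ * p.2 ^ 2 - κ₃ * p.2 = 0}
        = {p : ℝ × ℝ | p.1 = (κ₂ * p.2 + κ₃) / κ₁ ∧ 0 < p.2} := by
      ext p
      simp only [Set.mem_setOf_eq]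
      constructor
      · rintro ⟨hp1, hp2, e1, e2⟩
        refine ⟨?_, hp2⟩
        have h : p.2 * (κ₁ * p.1 - κ₂ * p.2 - κ₃) = 0 := by nlinarith [e1]
        rcases mul_eq_zero.mp h with h' | h'
        · exact absurd h' (ne_of_gt hp2)
        · field_simp
          linarith
      · rintro ⟨hx, hp2⟩
        have hx2 : 0 < p.1 := by
          rw [hx]; positivity
        refine ⟨hx2, hp2, ?_, ?_⟩
        · rw [hx]; field_simp; ring
        · rw [hx]; field_simp; ring
    refine ⟨hset, ?_⟩
    rw [hset]
    have : Set.InjOn (fun t : ℝ => (((κ₂ * t + κ₃) / κ₁, t) : ℝ × ℝ)) (Set.Ioi 0) := by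
      intro a _ b _ h
      exact congrArg Prod.snd h
    have himg := (Set.Ioi_infinite (0:ℝ)).image this
    refine himg.mono ?_
    rintro q ⟨t, ht, rfl⟩
    exact ⟨rfl, ht⟩
end
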